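/- arXiv:1309.0339 — 6 statements merged into one kernel-verified Lean document; each statement's English description precedes it below -/
import Mathlib

section
/- Let N be a positive integer and for each i ∈ Fin N let p_i be a multivariate polynomial over ℝ in variables indexed by Fin N, all of whose coefficients are nonnegative and whose coefficients sum to at most 1. Define T : (Fin N → ℝ) → (Fin N → ℝ) by (T x) i = eval x (p_i), and the sequence x_0 = 0, x_{k+1} = T x_k. Then (x_k) is pointwise monotone nondecreasing, bounded above pointwise by 1, converges pointwise to a limit x_∞ satisfying T x_∞ = x_∞, and x_∞ is the least fixed point among nonnegative vectors: for every y : Fin N → ℝ with 0 ≤ y pointwise and T y = y, one has x_∞ ≤ y pointwise. -/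
open MvPolynomial Filter

private lemma eval_nonneg_aux {N : ℕ} (q : MvPolynomial (Fin N) ℝ)
    (hc : ∀ m, 0 ≤ q.coeff m) {v : Fin N → ℝ} (hv : ∀ i, 0 ≤ v i) :
    0 ≤ eval v q := by
  rw [eval_eq]
  apply Finset.sum_nonneg
  intro d _
  exact mul_nonneg (hc d) (Finset.prod_nonneg fun i _ => pow_nonneg (hv i) _)

private lemma eval_mono_aux {N : ℕ} (q : MvPolynomial (Fin N) ℝ)
    (hc : ∀ m, 0 ≤ q.coeff m) {v w : Fin N → ℝ} (hv : ∀ i, 0 ≤ v i)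
    (hvw : ∀ i, v i ≤ w i) : eval v q ≤ eval w q := by
  rw [eval_eq, eval_eq]
  apply Finset.sum_le_sum
  intro d _
  apply mul_le_mul_of_nonneg_left _ (hc d)
  apply Finset.prod_le_prod
  · intro i _; exact pow_nonneg (hv i) _
  · intro i _; exact pow_le_pow_left₀ (hv i) (hvw i) _

private lemma eval_le_one_aux {N : ℕ} (q : MvPolynomial (Fin N) ℝ)
    (hc : ∀ m, 0 ≤ q.coeff m) (hs : ∑ m ∈ q.support, q.coeff m ≤ 1)
    {v : Fin N → ℝ} (hv0 : ∀ i, 0 ≤ v i) (hv1 : ∀ i, v i ≤ 1) :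
    eval v q ≤ 1 := by
  rw [eval_eq]
  refine le_trans (Finset.sum_le_sum fun d _ => ?_) hs
  have h1 : (∏ i ∈ d.support, v i ^ d i) ≤ 1 :=
    Finset.prod_le_one (fun i _ => pow_nonneg (hv0 i) _)
      (fun i _ => pow_le_one₀ (hv0 i) (hv1 i))
  calc q.coeff d * ∏ i ∈ d.support, v i ^ d i ≤ q.coeff d * 1 :=
        mul_le_mul_of_nonneg_left h1 (hc d)
    _ = q.coeff d := mul_one _

theorem kleene_iteration_least_fixed_point (N : ℕ) (hN : 0 < N)
    (p : Fin N → MvPolynomial (Fin N) ℝ)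
    (hcoeff : ∀ i m, 0 ≤ (p i).coeff m)
    (hsum : ∀ i, ∑ m ∈ (p i).support, (p i).coeff m ≤ 1)
    (T : (Fin N → ℝ) → (Fin N → ℝ))
    (hT : ∀ x i, T x i = eval x (p i))
    (x : ℕ → Fin N → ℝ) (hx0 : x 0 = 0) (hxs : ∀ k, x (k + 1) = T (x k)) :
    (∀ i, Monotone fun k => x k i) ∧
    (∀ k i, x k i ≤ 1) ∧
    ∃ xinf : Fin N → ℝ,
      (∀ i, Tendsto (fun k => x k i) atTop (nhds (xinf i))) ∧
      T xinf = xinf ∧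
      ∀ y : Fin N → ℝ, (∀ i, 0 ≤ y i) → T y = y → ∀ i, xinf i ≤ y i := by
  -- nonnegativity
  have hnn : ∀ k i, 0 ≤ x k i := by
    intro k
    induction k with
    | zero => intro i; rw [hx0]; exact le_refl 0
    | succ n ih =>
      intro i
      rw [hxs, hT]
      exact eval_nonneg_aux _ (hcoeff i) ih
  -- step monotonicity
  have hstep : ∀ k i, x k i ≤ x (k + 1) i := by
    intro k
    induction k with
    | zero => intro i; rw [hx0]; exact hnn 1 i
    | succ n ih =>
      intro i
      rw [hxs, hxs, hT, hT]
      exact eval_mono_aux _ (hcoeff i) (hnn n) ih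
  have hmono : ∀ i, Monotone fun k => x k i := fun i =>
    monotone_nat_of_le_succ fun k => hstep k i
  -- bounded by 1
  have hle1 : ∀ k i, x k i ≤ 1 := by
    intro k
    induction k with
    | zero => intro i; rw [hx0]; exact zero_le_one
    | succ n ih =>
      intro i
      rw [hxs, hT]
      exact eval_le_one_aux _ (hcoeff i) (hsum i) (hnn n) ih
  refine ⟨hmono, hle1, ?_⟩
  -- limit
  set xinf : Fin N → ℝ := fun i => ⨆ k, x k i with hxinf
  have hbdd : ∀ i, BddAbove (Set.range fun k => x k i) := fun i =>
    ⟨1, by rintro _ ⟨k, rfl⟩; exact hle1 k i⟩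
  have htend : ∀ i, Tendsto (fun k => x k i) atTop (nhds (xinf i)) := fun i =>
    tendsto_atTop_ciSup (hmono i) (hbdd i)
  have htend' : Tendsto x atTop (nhds xinf) := by
    rw [tendsto_pi_nhds]; exact htend
  have hfix : T xinf = xinf := by
    funext i
    have h1 : Tendsto (fun k => x (k + 1) i) atTop (nhds (xinf i)) :=
      (htend i).comp (tendsto_add_atTop_nat 1)
    have h2 : Tendsto (fun k => eval (x k) (p i)) atTop (nhds (eval xinf (p i))) :=
      (MvPolynomial.continuous_eval (p i)).continuousAt.tendsto.comp htend'
    have h3 : (fun k => x (k + 1) i) = fun k => eval (x k) (p i) := by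
      funext k; rw [hxs, hT]
    rw [hT]
    rw [← h3] at h2
    exact tendsto_nhds_unique h2 h1
  refine ⟨xinf, htend, hfix, ?_⟩
  intro y hy hTy i
  have hky : ∀ k i, x k i ≤ y i := by
    intro k
    induction k with
    | zero => intro i; rw [hx0]; exact hy i
    | succ n ih =>
      intro i
      rw [hxs, hT]
      calc eval (x n) (p i) ≤ eval y (p i) := eval_mono_aux _ (hcoeff i) (hnn n) ih
        _ = T y i := (hT y i).symm
        _ = y i := by rw [hTy]
  exact le_of_tendsto (htend i) (Eventually.of_forall fun k => hky k i)
end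

section
/- Let M be a K × K real matrix that is entrywise nonnegative, and let X, Y : Fin K → ℝ be entrywise nonnegative vectors satisfying X = M.mulVec X + Y. Then for each coordinate i, the real sequence k ↦ (((∑_{j < k} M^j)).mulVec Y) i is monotone nondecreasing and bounded above by X i, hence converges; consequently the sequence k ↦ ((M^k).mulVec X) i also converges. -/
open Filter

private lemma mulVec_nonneg' {K : ℕ} {A : Matrix (Fin K) (Fin K) ℝ}
    (hA : ∀ i j, 0 ≤ A i j) {v : Fin K → ℝ} (hv : ∀ i, 0 ≤ v i) :
    ∀ i, 0 ≤ A.mulVec v i := by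
  intro i
  simp only [Matrix.mulVec, dotProduct]
  exact Finset.sum_nonneg fun j _ => mul_nonneg (hA i j) (hv j)

private lemma pow_nonneg' {K : ℕ} {M : Matrix (Fin K) (Fin K) ℝ}
    (hM : ∀ i j, 0 ≤ M i j) : ∀ k i j, 0 ≤ (M ^ k) i j := by
  intro k
  induction k with
  | zero => intro i j; simp [Matrix.one_apply]; positivity
  | succ n ih =>
    intro i j
    rw [pow_succ, Matrix.mul_apply]
    exact Finset.sum_nonneg fun l _ => mul_nonneg (ih i l) (hM l j)

theorem partial_sums_converge {K : ℕ} (M : Matrix (Fin K) (Fin K) ℝ)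
    (hM : ∀ i j, 0 ≤ M i j) (X Y : Fin K → ℝ)
    (hX : ∀ i, 0 ≤ X i) (hY : ∀ i, 0 ≤ Y i)
    (h : X = M.mulVec X + Y) :
    ∀ i, Monotone (fun k => ((∑ j ∈ Finset.range k, M ^ j).mulVec Y) i) ∧
      (∀ k, ((∑ j ∈ Finset.range k, M ^ j).mulVec Y) i ≤ X i) ∧
      (∃ l : ℝ, Tendsto (fun k => ((∑ j ∈ Finset.range k, M ^ j).mulVec Y) i)
        atTop (nhds l)) ∧
      (∃ l' : ℝ, Tendsto (fun k => ((M ^ k).mulVec X) i) atTop (nhds l')) := by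
  have key : ∀ k, X = (∑ j ∈ Finset.range k, M ^ j).mulVec Y + (M ^ k).mulVec X := by
    intro k
    induction k with
    | zero => simp [Matrix.one_mulVec]
    | succ n ih =>
      have h2 : Matrix.mulVec (M ^ n) X = Matrix.mulVec (M ^ n) (M.mulVec X + Y) := by
        rw [← h]
      rw [Matrix.mulVec_add, Matrix.mulVec_mulVec, ← pow_succ] at h2
      rw [Finset.sum_range_succ, Matrix.add_mulVec]
      conv_lhs => rw [ih, h2]
      abel
  have hmono : ∀ i, Monotone (fun k => ((∑ j ∈ Finset.range k, M ^ j).mulVec Y) i) := by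
    intro i
    apply monotone_nat_of_le_succ
    intro k
    rw [Finset.sum_range_succ, Matrix.add_mulVec]
    simp only [Pi.add_apply]
    have := mulVec_nonneg' (pow_nonneg' hM k) hY i
    linarith
  have hbdd : ∀ i k, ((∑ j ∈ Finset.range k, M ^ j).mulVec Y) i ≤ X i := by
    intro i k
    have := congrFun (key k) i
    have h2 := mulVec_nonneg' (pow_nonneg' hM k) hX i
    simp only [Pi.add_apply] at this
    linarith
  intro i
  refine ⟨hmono i, hbdd i, ?_⟩
  have hconv : ∃ l, Tendsto (fun k => ((∑ j ∈ Finset.range k, M ^ j).mulVec Y) i)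
      atTop (nhds l) := by
    refine ⟨_, tendsto_atTop_ciSup (hmono i) ⟨X i, ?_⟩⟩
    rintro x ⟨k, rfl⟩
    exact hbdd i k
  refine ⟨hconv, ?_⟩
  obtain ⟨l, hl⟩ := hconv
  refine ⟨X i - l, ?_⟩
  have : (fun k => ((M ^ k).mulVec X) i)
      = fun k => X i - ((∑ j ∈ Finset.range k, M ^ j).mulVec Y) i := by
    funext k
    have := congrFun (key k) i
    simp only [Pi.add_apply] at this
    linarith
  rw [this]
  exact Tendsto.const_sub _ hl
end

section
/- Let M be a K × K real matrix that is entrywise nonnegative and let X : Fin K → ℝ be an entrywise strictly positive vector such that the sequence of vectors (M^k).mulVec X is bounded, i.e., there is a constant C with ((M^k).mulVec X) i ≤ C for all k and all i. Then every complex eigenvalue of the complexification of M has modulus at most 1. -/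
theorem eigenvalues_le_one_of_bounded_iterates {K : ℕ}
    (M : Matrix (Fin K) (Fin K) ℝ) (hM : ∀ i j, 0 ≤ M i j)
    (X : Fin K → ℝ) (hX : ∀ i, 0 < X i)
    (C : ℝ) (hC : ∀ k : ℕ, ∀ i, ((M ^ k).mulVec X) i ≤ C) :
    ∀ lam : ℂ,
      (∃ v : Fin K → ℂ, v ≠ 0 ∧ (M.map Complex.ofReal).mulVec v = lam • v) →
      ‖lam‖ ≤ 1 := by
  rintro lam ⟨v, hv, hev⟩
  by_contra h
  push_neg at h
  obtain ⟨i0, hi0⟩ : ∃ i, v i ≠ 0 := by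
    by_contra h'; push_neg at h'; exact hv (funext h')
  haveI : Nonempty (Fin K) := ⟨i0⟩
  -- powers of nonneg matrix are nonneg
  have hpowpos : ∀ k : ℕ, ∀ i j, 0 ≤ (M ^ k) i j := by
    intro k
    induction k with
    | zero => intro i j; simp [Matrix.one_apply]; split <;> norm_num
    | succ n ih =>
      intro i j
      rw [pow_succ, Matrix.mul_apply]
      exact Finset.sum_nonneg fun l _ => mul_nonneg (ih i l) (hM l j)
  -- iterated eigenvector equation
  have hpow : ∀ k : ℕ, ((M.map Complex.ofReal) ^ k).mulVec v = lam ^ k • v := by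
    intro k
    induction k with
    | zero => simp
    | succ n ih =>
      rw [pow_succ', ← Matrix.mulVec_mulVec, ih, Matrix.mulVec_smul, hev, pow_succ',
        mul_smul, smul_comm]
  have hmap : ∀ k : ℕ, (M.map Complex.ofReal) ^ k = (M ^ k).map Complex.ofReal := by
    intro k
    induction k with
    | zero => simp [Matrix.map_one]
    | succ n ih =>
      rw [pow_succ, pow_succ, ih]
      ext i j
      simp [Matrix.mul_apply, Matrix.map_apply]
  -- dominating constant
  set c : ℝ := Finset.univ.sup' Finset.univ_nonempty (fun j => ‖v j‖ / X j) with hc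
  have hcv : ∀ j, ‖v j‖ ≤ c * X j := by
    intro j
    have h1 : ‖v j‖ / X j ≤ c :=
      Finset.le_sup' (fun j => ‖v j‖ / X j) (Finset.mem_univ j)
    calc ‖v j‖ = (‖v j‖ / X j) * X j :=
          (div_mul_cancel₀ _ (hX j).ne').symm
      _ ≤ c * X j := mul_le_mul_of_nonneg_right h1 (hX j).le
  -- key bound
  have key : ∀ k : ℕ, ‖lam‖ ^ k * ‖v i0‖ ≤ c * C := by
    intro k
    have h1 : ((M ^ k).map Complex.ofReal).mulVec v i0 = lam ^ k • v i0 := by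
      have := hpow k
      rw [hmap k] at this
      exact congrFun this i0
    have h2 : ‖(lam ^ k • v) i0‖ ≤ c * ((M ^ k).mulVec X i0) := by
      rw [Pi.smul_apply, ← h1]
      simp only [Matrix.mulVec, dotProduct, Matrix.map_apply]
      calc ‖∑ j, (((M ^ k) i0 j : ℝ) : ℂ) * v j‖
          ≤ ∑ j, ‖(((M ^ k) i0 j : ℝ) : ℂ) * v j‖ := by
            exact norm_sum_le _ _
        _ = ∑ j, (M ^ k) i0 j * ‖v j‖ := by
            apply Finset.sum_congr rfl
            intro j _
            rw [norm_mul, Complex.norm_of_nonneg (hpowpos k i0 j)]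
        _ ≤ ∑ j, (M ^ k) i0 j * (c * X j) :=
            Finset.sum_le_sum fun j _ =>
              mul_le_mul_of_nonneg_left (hcv j) (hpowpos k i0 j)
        _ = c * ∑ j, (M ^ k) i0 j * X j := by
            rw [Finset.mul_sum]; apply Finset.sum_congr rfl; intro j _; ring
        _ = c * ((M ^ k).mulVec X i0) := rfl
    have h3 : ‖(lam ^ k • v) i0‖ = ‖lam‖ ^ k * ‖v i0‖ := by
      simp [map_mul, map_pow]
    have hc0 : 0 ≤ c :=
      le_trans (div_nonneg (norm_nonneg _) (hX i0).le)
        (Finset.le_sup' (fun j => ‖v j‖ / X j) (Finset.mem_univ i0))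
    calc ‖lam‖ ^ k * ‖v i0‖ = ‖(lam ^ k • v) i0‖ := h3.symm
      _ ≤ c * ((M ^ k).mulVec X i0) := h2
      _ ≤ c * C := mul_le_mul_of_nonneg_left (hC k i0) hc0
  -- contradiction via archimedean
  have hvi0 : 0 < ‖v i0‖ := by
    simpa using hi0
  obtain ⟨k, hk⟩ := pow_unbounded_of_one_lt (c * C / ‖v i0‖) h
  have := key k
  rw [← le_div_iff₀ hvi0] at this
  exact absurd this (not_le.mpr hk)
end

section
/- Let M be a K × K real matrix that is entrywise nonnegative and irreducible (for all indices i, j there exists k ≥ 1 with (M^k) i j > 0), such that every complex eigenvalue of the complexification of M has modulus at most 1 and 1 is an eigenvalue. Then for every entrywise nonnegative, nonzero vector Y : Fin K → ℝ, the sequence of vectors ((∑_{j < k} M^j)).mulVec Y is unbounded: for some coordinate i, the sequence k ↦ (((∑_{j < k} M^j)).mulVec Y) i tends to +∞. -/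
open Filter Matrix

theorem partial_sums_unbounded_of_eigenvalue_one {K : ℕ}
    (M : Matrix (Fin K) (Fin K) ℝ) (hM : ∀ i j, 0 ≤ M i j)
    (hirr : ∀ i j, ∃ k : ℕ, 1 ≤ k ∧ 0 < (M ^ k) i j)
    (hspec : ∀ lam : ℂ,
      (∃ v : Fin K → ℂ, v ≠ 0 ∧ (M.map Complex.ofReal).mulVec v = lam • v) →
      ‖lam‖ ≤ 1)
    (hone : ∃ v : Fin K → ℂ, v ≠ 0 ∧ (M.map Complex.ofReal).mulVec v = (1 : ℂ) • v)
    (Y : Fin K → ℝ) (hY : ∀ i, 0 ≤ Y i) (hY0 : Y ≠ 0) :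
    ∃ i, Tendsto (fun k : ℕ => ((∑ j ∈ Finset.range k, M ^ j).mulVec Y) i)
      atTop atTop := by
  classical
  set A := M.map Complex.ofReal with hA
  -- From hone, det (A - 1) = 0.
  obtain ⟨v, hv0, hv⟩ := hone
  have hdet : (A - 1).det = 0 := by
    rw [← Matrix.exists_mulVec_eq_zero_iff]
    refine ⟨v, hv0, ?_⟩
    rw [Matrix.sub_mulVec, Matrix.one_mulVec, hv, one_smul, sub_self]
  -- Hence det (Aᵀ - 1) = 0 and we get a left eigenvector u.
  have hdetT : (Aᵀ - 1).det = 0 := by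
    have : (Aᵀ - 1) = (A - 1)ᵀ := by
      rw [Matrix.transpose_sub, Matrix.transpose_one]
    rw [this, Matrix.det_transpose, hdet]
  obtain ⟨u, hu0, hu⟩ := (Matrix.exists_mulVec_eq_zero_iff).mpr hdetT
  have huA : Aᵀ.mulVec u = u := by
    have := hu
    rw [Matrix.sub_mulVec, Matrix.one_mulVec, sub_eq_zero] at this
    exact this
  -- w = |u| is a nonnegative left super-eigenvector of M for eigenvalue 1.
  set w : Fin K → ℝ := fun i => ‖u i‖ with hw
  have hwnn : ∀ i, 0 ≤ w i := fun i => norm_nonneg _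
  have hstep : ∀ j, w j ≤ ∑ i, w i * M i j := by
    intro j
    have hj : u j = ∑ i, (M i j : ℂ) * u i := by
      have := congrFun huA j
      simpa [Matrix.mulVec, dotProduct, A, Matrix.map_apply] using this.symm
    calc w j = ‖∑ i, (M i j : ℂ) * u i‖ := by rw [hw]; simp [← hj]
      _ ≤ ∑ i, ‖(M i j : ℂ) * u i‖ := norm_sum_le _ _
      _ = ∑ i, w i * M i j := by
          refine Finset.sum_congr rfl fun i _ => ?_
          rw [norm_mul, Complex.norm_real, Real.norm_of_nonneg (hM i j)]
          ring
  -- w ≤ w ᵥ* M^m entrywise.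
  have hpownn : ∀ m : ℕ, ∀ i j, 0 ≤ (M ^ m) i j := by
    intro m
    induction m with
    | zero => intro i j; simp [Matrix.one_apply]; positivity
    | succ n ih =>
        intro i j
        rw [pow_succ, Matrix.mul_apply]
        exact Finset.sum_nonneg fun l _ => mul_nonneg (ih i l) (hM l j)
  have hvecMul_mono : ∀ x y : Fin K → ℝ, (∀ i, x i ≤ y i) →
      ∀ j, (x ᵥ* M) j ≤ (y ᵥ* M) j := by
    intro x y hxy j
    simp only [Matrix.vecMul, dotProduct]
    exact Finset.sum_le_sum fun i _ => mul_le_mul_of_nonneg_right (hxy i) (hM i j)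
  have hwM : ∀ j, w j ≤ (w ᵥ* M) j := by
    intro j
    simpa [Matrix.vecMul, dotProduct] using hstep j
  have hwpow : ∀ m : ℕ, ∀ j, w j ≤ (w ᵥ* (M ^ m)) j := by
    intro m
    induction m with
    | zero => intro j; simp
    | succ n ih =>
        intro j
        have h1 : (w ᵥ* (M ^ (n+1))) j = ((w ᵥ* (M ^ n)) ᵥ* M) j := by
          rw [pow_succ, ← Matrix.vecMul_vecMul]
        rw [h1]
        exact le_trans (hwM j) (hvecMul_mono w (w ᵥ* (M ^ n)) ih j)
  -- pick indices where w and Y are positive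
  obtain ⟨i0, hi0⟩ := Function.ne_iff.mp hu0
  have hwi0 : 0 < w i0 := by
    have := norm_pos_iff.mpr hi0
    simpa [hw] using this
  obtain ⟨j0, hj0⟩ := Function.ne_iff.mp hY0
  have hYj0 : 0 < Y j0 := lt_of_le_of_ne (hY j0) (Ne.symm hj0)
  obtain ⟨k, _, hk⟩ := hirr i0 j0
  set c : ℝ := w i0 * ((M ^ k) i0 j0 * Y j0) with hc
  have hcpos : 0 < c := mul_pos hwi0 (mul_pos hk hYj0)
  have hmulVecnn : ∀ m : ℕ, ∀ i, 0 ≤ ((M ^ m).mulVec Y) i := by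
    intro m i
    simp only [Matrix.mulVec, dotProduct]
    exact Finset.sum_nonneg fun j _ => mul_nonneg (hpownn m i j) (hY j)
  -- c ≤ w ⬝ᵥ (M^k).mulVec Y
  have hbase : c ≤ w ⬝ᵥ ((M ^ k).mulVec Y) := by
    have h1 : c ≤ w i0 * ((M ^ k).mulVec Y) i0 := by
      rw [hc]
      refine mul_le_mul_of_nonneg_left ?_ (hwnn i0)
      exact Finset.single_le_sum (f := fun j => (M ^ k) i0 j * Y j)
        (fun j _ => mul_nonneg (hpownn k i0 j) (hY j)) (Finset.mem_univ j0)
    refine h1.trans ?_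
    exact Finset.single_le_sum (f := fun i => w i * ((M ^ k).mulVec Y) i)
      (fun i _ => mul_nonneg (hwnn i) (hmulVecnn k i)) (Finset.mem_univ i0)
  -- c ≤ w ⬝ᵥ (M^n).mulVec Y for all n ≥ k
  have hterm : ∀ n, k ≤ n → c ≤ w ⬝ᵥ ((M ^ n).mulVec Y) := by
    intro n hn
    obtain ⟨m, rfl⟩ := Nat.exists_eq_add_of_le hn
    have heq : w ⬝ᵥ ((M ^ (k + m)).mulVec Y)
        = (w ᵥ* (M ^ m)) ⬝ᵥ ((M ^ k).mulVec Y) := by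
      rw [add_comm k m, pow_add, ← Matrix.mulVec_mulVec, dotProduct_mulVec]
    rw [heq]
    refine hbase.trans ?_
    exact Finset.sum_le_sum fun i _ =>
      mul_le_mul_of_nonneg_right (hwpow m i) (hmulVecnn k i)
  -- partial sums, coordinates are monotone
  set f : ℕ → Fin K → ℝ := fun n => (∑ j ∈ Finset.range n, M ^ j).mulVec Y with hf
  have hfsucc : ∀ n i, f (n + 1) i = f n i + ((M ^ n).mulVec Y) i := by
    intro n i
    simp [hf, Finset.sum_range_succ, Matrix.add_mulVec]
  have hmono : ∀ i, Monotone fun n => f n i := by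
    intro i
    apply monotone_nat_of_le_succ
    intro n
    rw [hfsucc n i]
    linarith [hmulVecnn n i]
  -- dot product with w grows linearly
  have hdot : ∀ n, w ⬝ᵥ f n = ∑ j ∈ Finset.range n, w ⬝ᵥ ((M ^ j).mulVec Y) := by
    intro n
    induction n with
    | zero => simp [hf]
    | succ m ih =>
        rw [Finset.sum_range_succ, ← ih]
        simp only [dotProduct]
        rw [← Finset.sum_add_distrib]
        refine Finset.sum_congr rfl fun i _ => ?_
        rw [hfsucc m i]; ring
  have hdotnn : ∀ j, 0 ≤ w ⬝ᵥ ((M ^ j).mulVec Y) := fun j =>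
    Finset.sum_nonneg fun i _ => mul_nonneg (hwnn i) (hmulVecnn j i)
  have hgrow : ∀ m : ℕ, (m : ℝ) * c ≤ w ⬝ᵥ f (k + m) := by
    intro m
    rw [hdot]
    calc (m : ℝ) * c = ∑ j ∈ Finset.Ico k (k + m), c := by
          rw [Finset.sum_const, Nat.card_Ico, Nat.add_sub_cancel_left, nsmul_eq_mul]
      _ ≤ ∑ j ∈ Finset.Ico k (k + m), w ⬝ᵥ ((M ^ j).mulVec Y) :=
          Finset.sum_le_sum fun j hj => hterm j (Finset.mem_Ico.mp hj).1
      _ ≤ ∑ j ∈ Finset.range (k + m), w ⬝ᵥ ((M ^ j).mulVec Y) := by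
          rw [Finset.range_eq_Ico]
          exact Finset.sum_le_sum_of_subset_of_nonneg
            (Finset.Ico_subset_Ico (Nat.zero_le _) le_rfl)
            (fun j _ _ => hdotnn j)
  -- conclude by contradiction
  by_contra hcon
  push_neg at hcon
  have hbdd : ∀ i, ∃ B : ℝ, ∀ n, f n i ≤ B := by
    intro i
    by_contra hB
    push_neg at hB
    apply hcon i
    apply tendsto_atTop_atTop_of_monotone (hmono i)
    intro b
    obtain ⟨n, hn⟩ := hB b
    exact ⟨n, hn.le⟩
  choose B hB using hbdd
  set C : ℝ := ∑ i, w i * B i with hC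
  have hCb : ∀ n, w ⬝ᵥ f n ≤ C := by
    intro n
    exact Finset.sum_le_sum fun i _ => mul_le_mul_of_nonneg_left (hB i n) (hwnn i)
  obtain ⟨m, hm⟩ := exists_nat_gt (C / c)
  have : C < (m : ℝ) * c := by
    rwa [div_lt_iff₀ hcpos] at hm
  linarith [hgrow m, hCb (k + m)]
end

section
/- Let M be a K × K real matrix that is entrywise nonnegative and irreducible (for all indices i, j there exists k ≥ 1 with (M^k) i j > 0), let X : Fin K → ℝ be entrywise strictly positive, and let Y : Fin K → ℝ be entrywise nonnegative and nonzero, with X = M.mulVec X + Y. Then every complex eigenvalue of the complexification of M has modulus strictly less than 1, the matrix I − M is invertible, and X = (I − M)⁻¹.mulVec Y; in particular X is the unique solution of the equation Z = M.mulVec Z + Y. -/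
namespace LPEaux

variable {K : ℕ}

lemma mulVec_apply' (A : Matrix (Fin K) (Fin K) ℝ) (u : Fin K → ℝ) (i : Fin K) :
    A.mulVec u i = ∑ j, A i j * u j := rfl

lemma pow_entry_nonneg (M : Matrix (Fin K) (Fin K) ℝ) (hM : ∀ i j, 0 ≤ M i j) :
    ∀ k i j, 0 ≤ (M ^ k) i j := by
  intro k
  induction k with
  | zero =>
      intro i j
      simp only [pow_zero, Matrix.one_apply]
      split <;> norm_num
  | succ n ih =>
      intro i j
      rw [pow_succ, Matrix.mul_apply]
      exact Finset.sum_nonneg fun l _ => mul_nonneg (ih i l) (hM l j)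

lemma mulVec_mono (A : Matrix (Fin K) (Fin K) ℝ) (hA : ∀ i j, 0 ≤ A i j)
    (u w : Fin K → ℝ) (h : ∀ i, u i ≤ w i) (i : Fin K) :
    A.mulVec u i ≤ A.mulVec w i := by
  rw [mulVec_apply', mulVec_apply']
  exact Finset.sum_le_sum fun j _ => mul_le_mul_of_nonneg_left (h j) (hA i j)

lemma mulVec_nonneg (A : Matrix (Fin K) (Fin K) ℝ) (hA : ∀ i j, 0 ≤ A i j)
    (u : Fin K → ℝ) (h : ∀ i, 0 ≤ u i) (i : Fin K) :
    0 ≤ A.mulVec u i := by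
  rw [mulVec_apply']
  exact Finset.sum_nonneg fun j _ => mul_nonneg (hA i j) (h j)

lemma mulVec_smul' (A : Matrix (Fin K) (Fin K) ℝ) (a : ℝ) (u : Fin K → ℝ) (i : Fin K) :
    A.mulVec (fun j => a * u j) i = a * A.mulVec u i := by
  rw [mulVec_apply', mulVec_apply', Finset.mul_sum]
  exact Finset.sum_congr rfl fun j _ => by ring

end LPEaux

open LPEaux in
theorem linear_probability_equations_unique_solution {K : ℕ}
    (M : Matrix (Fin K) (Fin K) ℝ) (hM : ∀ i j, 0 ≤ M i j)
    (hirr : ∀ i j, ∃ k : ℕ, 1 ≤ k ∧ 0 < (M ^ k) i j)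
    (X : Fin K → ℝ) (hX : ∀ i, 0 < X i)
    (Y : Fin K → ℝ) (hY : ∀ i, 0 ≤ Y i) (hY0 : Y ≠ 0)
    (heq : X = M.mulVec X + Y) :
    (∀ lam : ℂ,
      (∃ v : Fin K → ℂ, v ≠ 0 ∧ (M.map Complex.ofReal).mulVec v = lam • v) →
      ‖lam‖ < 1) ∧
    IsUnit (1 - M) ∧
    X = (1 - M)⁻¹.mulVec Y ∧
    ∀ Z : Fin K → ℝ, Z = M.mulVec Z + Y → Z = X := by
  -- K is positive
  have hK : 0 < K := by
    rcases Nat.eq_zero_or_pos K with h | h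
    · subst h
      exact absurd (funext fun i => i.elim0) hY0
    · exact h
  haveI : Nonempty (Fin K) := ⟨⟨0, hK⟩⟩
  have hne : (Finset.univ : Finset (Fin K)).Nonempty := Finset.univ_nonempty
  -- index where Y is positive
  obtain ⟨i0, hi0⟩ : ∃ i, 0 < Y i := by
    by_contra h
    push_neg at h
    exact hY0 (funext fun i => le_antisymm (h i) (hY i))
  -- M.mulVec X ≤ X
  have hMX : ∀ i, M.mulVec X i ≤ X i := by
    intro i
    have := congrFun heq i
    simp only [Pi.add_apply] at this
    nlinarith [hY i]
  -- monotone decrease of (M^n).mulVec X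
  have hsub : ∀ n i, (M ^ (n + 1)).mulVec X i ≤ (M ^ n).mulVec X i := by
    intro n i
    rw [pow_succ, ← Matrix.mulVec_mulVec]
    exact mulVec_mono _ (pow_entry_nonneg M hM n) _ _ hMX i
  have hanti : ∀ i : Fin K, Antitone fun n => (M ^ n).mulVec X i := by
    intro i
    exact antitone_nat_of_succ_le fun n => hsub n i
  -- for each j, some power strictly decreases
  have hstep : ∀ j : Fin K, ∃ m : ℕ, (M ^ m).mulVec X j < X j := by
    intro j
    obtain ⟨k, -, hkpos⟩ := hirr j i0
    refine ⟨k + 1, ?_⟩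
    have hYpos : 0 < (M ^ k).mulVec Y j := by
      rw [mulVec_apply']
      refine Finset.sum_pos' (fun l _ => mul_nonneg (pow_entry_nonneg M hM k j l) (hY l)) ?_
      exact ⟨i0, Finset.mem_univ i0, mul_pos hkpos hi0⟩
    have hdecomp : (M ^ k).mulVec X j = (M ^ (k + 1)).mulVec X j + (M ^ k).mulVec Y j := by
      conv_lhs => rw [heq]
      rw [Matrix.mulVec_add, pow_succ, ← Matrix.mulVec_mulVec]
      simp
    have h1 : (M ^ (k + 1)).mulVec X j < (M ^ k).mulVec X j := by linarith
    have h2 : (M ^ k).mulVec X j ≤ (M ^ 0).mulVec X j := hanti j (Nat.zero_le k)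
    rw [pow_zero, Matrix.one_mulVec] at h2
    exact lt_of_lt_of_le h1 h2
  choose nsel hnsel using hstep
  set N : ℕ := Finset.univ.sup nsel with hNdef
  have hN : ∀ j, (M ^ N).mulVec X j < X j := by
    intro j
    exact lt_of_le_of_lt (hanti j (Finset.le_sup (Finset.mem_univ j))) (hnsel j)
  -- contraction ratio
  set θ : ℝ := Finset.univ.sup' hne (fun j => (M ^ N).mulVec X j / X j) with hθdef
  have hθlt : θ < 1 := by
    rw [hθdef, Finset.sup'_lt_iff]
    exact fun j _ => (div_lt_one (hX j)).mpr (hN j)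
  have hθle : ∀ j, (M ^ N).mulVec X j ≤ θ * X j := by
    intro j
    have := Finset.le_sup' (fun j => (M ^ N).mulVec X j / X j) (Finset.mem_univ j)
    exact (div_le_iff₀ (hX j)).mp this
  -- eigenvalue part
  have heig : ∀ lam : ℂ,
      (∃ v : Fin K → ℂ, v ≠ 0 ∧ (M.map Complex.ofReal).mulVec v = lam • v) →
      ‖lam‖ < 1 := by
    intro lam ⟨v, hv0, hv⟩
    set a : ℝ := ‖lam‖ with hadef
    set w : Fin K → ℝ := fun i => ‖v i‖ with hwdef
    have hwnn : ∀ i, 0 ≤ w i := fun i => norm_nonneg _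
    have habs : ∀ i, a * w i ≤ M.mulVec w i := by
      intro i
      have hvi := congrFun hv i
      simp only [Pi.smul_apply, smul_eq_mul] at hvi
      have h1 : a * w i = ‖(M.map Complex.ofReal).mulVec v i‖ := by
        rw [hvi, norm_mul]
      rw [h1]
      have h2 : (M.map Complex.ofReal).mulVec v i = ∑ j, (M i j : ℂ) * v j := by
        simp [Matrix.mulVec, dotProduct, Matrix.map_apply]
      rw [h2, mulVec_apply']
      calc ‖∑ j, (M i j : ℂ) * v j‖
          ≤ ∑ j, ‖(M i j : ℂ) * v j‖ := norm_sum_le _ _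
        _ = ∑ j, M i j * w j := by
            refine Finset.sum_congr rfl fun j _ => ?_
            rw [norm_mul, Complex.norm_real, Real.norm_of_nonneg (hM i j)]
    -- powers
    have hpow : ∀ k i, a ^ k * w i ≤ (M ^ k).mulVec w i := by
      intro k
      induction k with
      | zero => intro i; simp [Matrix.one_mulVec]
      | succ n ih =>
          intro i
          have h1 : (M ^ (n + 1)).mulVec w i = (M ^ n).mulVec (M.mulVec w) i := by
            rw [pow_succ, ← Matrix.mulVec_mulVec]
          have h2 : (M ^ n).mulVec (fun j => a * w j) i ≤ (M ^ n).mulVec (M.mulVec w) i :=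
            mulVec_mono _ (pow_entry_nonneg M hM n) _ _ habs i
          have h3 : (M ^ n).mulVec (fun j => a * w j) i = a * (M ^ n).mulVec w i :=
            mulVec_smul' _ _ _ _
          have h4 : a * (a ^ n * w i) ≤ a * (M ^ n).mulVec w i :=
            mul_le_mul_of_nonneg_left (ih i) (norm_nonneg lam)
          calc a ^ (n + 1) * w i = a * (a ^ n * w i) := by ring
            _ ≤ a * (M ^ n).mulVec w i := h4
            _ = (M ^ n).mulVec (fun j => a * w j) i := h3.symm
            _ ≤ (M ^ n).mulVec (M.mulVec w) i := h2
            _ = (M ^ (n + 1)).mulVec w i := h1.symm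
    -- maximizer of w / X
    set c : ℝ := Finset.univ.sup' hne (fun j => w j / X j) with hcdef
    obtain ⟨jm, -, hjm⟩ := Finset.exists_mem_eq_sup' hne (fun j => w j / X j)
    have hwjm : w jm = c * X jm := by
      field_simp [hcdef] at hjm ⊢
      linarith [(div_eq_iff (ne_of_gt (hX jm))).mp hjm.symm]
    have hcpos : 0 < c := by
      obtain ⟨i1, hi1⟩ := Function.ne_iff.mp hv0
      have hwi1 : 0 < w i1 := norm_pos_iff.mpr hi1
      have h := Finset.le_sup' (fun j => w j / X j) (Finset.mem_univ i1)
      rw [← hcdef] at h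
      exact lt_of_lt_of_le (div_pos hwi1 (hX i1)) h
    have hwle : ∀ j, w j ≤ c * X j := by
      intro j
      have h := Finset.le_sup' (fun j => w j / X j) (Finset.mem_univ j)
      rw [← hcdef] at h
      exact (div_le_iff₀ (hX j)).mp h
    -- key inequality
    have hkey : a ^ N * (c * X jm) ≤ c * (θ * X jm) := by
      calc a ^ N * (c * X jm) = a ^ N * w jm := by rw [hwjm]
        _ ≤ (M ^ N).mulVec w jm := hpow N jm
        _ ≤ (M ^ N).mulVec (fun j => c * X j) jm :=
            mulVec_mono _ (pow_entry_nonneg M hM N) _ _ hwle jm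
        _ = c * (M ^ N).mulVec X jm := mulVec_smul' _ _ _ _
        _ ≤ c * (θ * X jm) := mul_le_mul_of_nonneg_left (hθle jm) (le_of_lt hcpos)
    have haN : a ^ N ≤ θ := by
      have hpos : 0 < c * X jm := mul_pos hcpos (hX jm)
      nlinarith
    by_contra hcon
    push_neg at hcon
    have : (1 : ℝ) ≤ a ^ N := one_le_pow₀ hcon
    linarith
  -- invertibility
  have hdet : (1 - M).det ≠ 0 := by
    intro h0
    obtain ⟨v, hv0, hv⟩ := Matrix.exists_mulVec_eq_zero_iff.mpr h0
    have hMv : M.mulVec v = v := by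
      rw [Matrix.sub_mulVec, Matrix.one_mulVec, sub_eq_zero] at hv
      exact hv.symm
    have h1 : ‖(1 : ℂ)‖ < 1 := by
      refine heig 1 ⟨fun i => (v i : ℂ), ?_, ?_⟩
      · obtain ⟨i1, hi1⟩ := Function.ne_iff.mp hv0
        intro h
        apply hi1
        have := congrFun h i1
        simpa using this
      · funext i
        have := congrFun hMv i
        rw [mulVec_apply'] at this
        simp only [Pi.smul_apply, smul_eq_mul, one_mul]
        have h2 : (M.map Complex.ofReal).mulVec (fun i => (v i : ℂ)) i
            = ((∑ j, M i j * v j : ℝ) : ℂ) := by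
          simp [Matrix.mulVec, dotProduct, Matrix.map_apply]
        rw [h2, this]
    simp at h1
  have hunit : IsUnit (1 - M) := (Matrix.isUnit_iff_isUnit_det _).mpr (isUnit_iff_ne_zero.mpr hdet)
  -- solution formula
  have hXY : (1 - M).mulVec X = Y := by
    funext i
    have h := congrFun heq i
    simp only [Matrix.sub_mulVec, Matrix.one_mulVec, Pi.sub_apply, Pi.add_apply] at *
    linarith
  have hsolve : ∀ W : Fin K → ℝ, (1 - M).mulVec W = Y → W = (1 - M)⁻¹.mulVec Y := by
    intro W hW
    rw [← hW, Matrix.mulVec_mulVec, Matrix.nonsing_inv_mul _ (isUnit_iff_ne_zero.mpr hdet), Matrix.one_mulVec]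
  have hXform : X = (1 - M)⁻¹.mulVec Y := hsolve X hXY
  refine ⟨heig, hunit, hXform, ?_⟩
  intro Z hZ
  have hZY : (1 - M).mulVec Z = Y := by
    funext i
    have h := congrFun hZ i
    simp only [Matrix.sub_mulVec, Matrix.one_mulVec, Pi.sub_apply, Pi.add_apply] at *
    linarith
  rw [hsolve Z hZY, ← hXform]
end

section
/- Let g be a context-free grammar. Define the direct left-corner relation on nonterminals by: X ▷ Y if and only if g has a production rule whose left-hand side is X and whose right-hand side begins with the nonterminal Y. If the left-corner relation is cyclic at X, i.e., (X, X) is in the transitive closure of ▷, then there exists a list of symbols δ and an intermediate sentential form u such that g produces u from [nonterminal X] in one derivation step and g derives (nonterminal X) :: δ from u; in particular [nonterminal X] derives (nonterminal X) :: δ in at least one step. -/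
theorem cyclic_left_corner_derives {T : Type*} (g : ContextFreeGrammar T)
    (lc : g.NT → g.NT → Prop)
    (hlc : ∀ X Y : g.NT, lc X Y ↔
      ∃ r ∈ g.rules, r.input = X ∧ ∃ β, r.output = Symbol.nonterminal Y :: β)
    (X : g.NT) (h : Relation.TransGen lc X X) :
    ∃ (δ : List (Symbol T g.NT)) (u : List (Symbol T g.NT)),
      g.Produces [Symbol.nonterminal X] u ∧
      g.Derives u (Symbol.nonterminal X :: δ) := by
  suffices H : ∀ Y : g.NT, Relation.TransGen lc X Y →
      ∃ (δ u : List (Symbol T g.NT)),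
        g.Produces [Symbol.nonterminal X] u ∧ g.Derives u (Symbol.nonterminal Y :: δ) from
    H X h
  intro Y h
  induction h with
  | single hXY =>
    obtain ⟨r, hr, hin, β, hout⟩ := (hlc _ _).mp hXY
    refine ⟨β, r.output, ⟨r, hr, ?_⟩, by rw [hout]⟩
    have := r.rewrites_of_exists_parts [] []
    simpa [hin] using this
  | tail _ hYZ ih =>
    obtain ⟨δ, u, hp, hd⟩ := ih
    obtain ⟨r, hr, hin, β, hout⟩ := (hlc _ _).mp hYZ
    refine ⟨β ++ δ, u, hp, hd.trans_produces ⟨r, hr, ?_⟩⟩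
    have := (r.rewrites_of_exists_parts [] δ)
    simpa [hin, hout] using this
end
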